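/- arXiv:2012.15675 — 5 statements merged into one kernel-verified Lean document; each statement's English description precedes it below -/
import Mathlib

section
/- Let G be a connected weighted graph on a finite vertex set V with Laplacian L, let T be a nonempty proper subset of V with complement S = V ∖ T, and assume L_{SS} is positive definite, so that the Schur complement SC(L,T) is defined. Let Z be a Moore–Penrose pseudoinverse of L, and let M̂ be the V × V matrix whose T × T block equals SC(L,T) and whose remaining entries are 0. Then Σ over edges e = {u,v} of G of w(u,v) · (χ_u − χ_v)ᵀ Z M̂ Z (χ_u − χ_v) ≤ |T|. -/
open Matrix

variable {V : Type*}

/-- The Laplacian of a weighted graph. -/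
noncomputable def lap [Fintype V] [DecidableEq V] (w : V → V → ℝ) : Matrix V V ℝ :=
  Matrix.of fun u v => if u = v then ∑ z, w u z else - w u v

/-- The block of a matrix with rows selected by `P` and columns selected by `Q`. -/
def blk (M : Matrix V V ℝ) (P Q : V → Prop) : Matrix {v // P v} {v // Q v} ℝ :=
  Matrix.of fun a b => M a.1 b.1

/-- The Schur complement of `M` onto `T`. -/
noncomputable def SC [Fintype V] [DecidableEq V] (M : Matrix V V ℝ) (T : Set V)
    [DecidablePred (· ∈ T)] : Matrix {v // v ∈ T} {v // v ∈ T} ℝ :=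
  blk M (· ∈ T) (· ∈ T) -
    blk M (· ∈ T) (fun v => v ∉ T) * (blk M (fun v => v ∉ T) (fun v => v ∉ T))⁻¹ *
      blk M (fun v => v ∉ T) (· ∈ T)

set_option linter.unusedSectionVars false
set_option linter.unusedVariables false

section Aux
variable [Fintype V] [DecidableEq V]

variable [Fintype V] [DecidableEq V]

lemma swap_sum (w : V → V → ℝ) (hw_symm : ∀ u v, w u v = w v u) (f : V → V → ℝ) :
    ∑ u, ∑ v, w u v * f u v = ∑ u, ∑ v, w u v * f v u := by
  rw [Finset.sum_comm]
  exact Finset.sum_congr rfl fun u _ => Finset.sum_congr rfl fun v _ => by rw [hw_symm]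

lemma lap_rowsum (w : V → V → ℝ) (hw_diag : ∀ u, w u u = 0) (u : V) :
    ∑ v, lap w u v = 0 := by
  have h : ∀ v, lap w u v = (if v = u then (∑ z, w u z) + w u v else 0) + (- w u v) := by
    intro v
    by_cases h : u = v
    · subst h; simp [lap, hw_diag]
    · simp [lap, h, Ne.symm h]
  simp_rw [h, Finset.sum_add_distrib, Finset.sum_ite_eq', Finset.mem_univ, if_true,
    Finset.sum_neg_distrib]
  rw [hw_diag]
  ring

lemma lap_mulVec_one (w : V → V → ℝ) (hw_diag : ∀ u, w u u = 0) :
    (lap w) *ᵥ (fun _ => (1:ℝ)) = 0 := by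
  funext u
  simp only [mulVec, dotProduct, mul_one, Pi.zero_apply]
  exact lap_rowsum w hw_diag u

lemma quad_eq_trace (w : V → V → ℝ) (hw_symm : ∀ u v, w u v = w v u)
    (hw_diag : ∀ u, w u u = 0) (N : Matrix V V ℝ) :
    (1 / 2 : ℝ) * ∑ u, ∑ v, w u v *
        ((Pi.single u 1 - Pi.single v 1) ⬝ᵥ N.mulVec (Pi.single u 1 - Pi.single v 1)) =
      trace (lap w * N) := by
  have hdot : ∀ u v : V, (Pi.single u 1 - Pi.single v 1) ⬝ᵥ
      N.mulVec (Pi.single u 1 - Pi.single v 1) = N u u + N v v - N u v - N v u := by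
    intro u v
    simp [mulVec_single, sub_dotProduct, dotProduct_sub, single_dotProduct,
      Matrix.mulVec_sub, sub_dotProduct, dotProduct_sub, single_dotProduct]
    ring
  simp_rw [hdot]
  -- trace side
  have htr : trace (lap w * N) = ∑ u, ∑ v, (lap w u v) * N v u := by
    simp [Matrix.trace, Matrix.diag, Matrix.mul_apply]
  have hlap : ∀ u v : V, lap w u v * N v u =
      ((if v = u then (∑ z, w u z) * N u u + w u v * N v u else 0) + (-(w u v * N v u))) := by
    intro u v
    by_cases h : u = v
    · subst h; simp [lap]; try ring
    · simp [lap, h, Ne.symm h]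
  rw [htr]
  simp_rw [hlap, Finset.sum_add_distrib, Finset.sum_ite_eq', Finset.mem_univ, if_true,
    Finset.sum_neg_distrib]
  have e1 : ∑ u, ((∑ z, w u z) * N u u + w u u * N u u) = ∑ u, ∑ v, w u v * N u u := by
    refine Finset.sum_congr rfl fun u _ => ?_
    rw [hw_diag, Finset.sum_mul]; ring
  rw [e1]
  have S2 : ∑ u, ∑ v, w u v * N v v = ∑ u, ∑ v, w u v * N u u :=
    swap_sum w hw_symm (fun a b => N b b)
  have S3 : ∑ u, ∑ v, w u v * N u v = ∑ u, ∑ v, w u v * N v u :=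
    swap_sum w hw_symm (fun a b => N a b)
  have expand : ∀ u v : V, w u v * (N u u + N v v - N u v - N v u) =
      w u v * N u u + w u v * N v v - w u v * N u v - w u v * N v u := fun u v => by ring
  simp_rw [expand, Finset.sum_sub_distrib, Finset.sum_add_distrib]
  rw [S2, S3]
  ring

lemma lap_kernel_const (w : V → V → ℝ) (hw_symm : ∀ u v, w u v = w v u)
    (hw_nonneg : ∀ u v, 0 ≤ w u v) (hw_diag : ∀ u, w u u = 0)
    (hconn : (SimpleGraph.fromRel fun u v => 0 < w u v).Connected)
    (x : V → ℝ) (hx : (lap w) *ᵥ x = 0) : ∀ u v, x u = x v := by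
  have hrow : ∀ u, ∑ v, lap w u v * x v = 0 := by
    intro u
    have := congrFun hx u
    simpa [mulVec, dotProduct] using this
  have h1 : ∑ u, ∑ v, lap w u v * (x u * x v) = 0 := by
    have : ∀ u, ∑ v, lap w u v * (x u * x v) = x u * ∑ v, lap w u v * x v := by
      intro u; rw [Finset.mul_sum]; exact Finset.sum_congr rfl fun v _ => by ring
    simp_rw [this, hrow, mul_zero, Finset.sum_const_zero]
  have hlap : ∀ u v : V, lap w u v * (x u * x v) =
      ((if v = u then (∑ z, w u z) * (x u * x u) + w u v * (x u * x v) else 0)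
        + (-(w u v * (x u * x v)))) := by
    intro u v
    by_cases h : u = v
    · subst h; simp [lap]; try ring
    · simp [lap, h, Ne.symm h]
  have h2 : ∑ u, ∑ v, w u v * (x u * x u) = ∑ u, ∑ v, w u v * (x u * x v) := by
    have := h1
    simp_rw [hlap, Finset.sum_add_distrib, Finset.sum_ite_eq', Finset.mem_univ, if_true,
      Finset.sum_neg_distrib] at this
    have e1 : ∑ u, ((∑ z, w u z) * (x u * x u) + w u u * (x u * x u))
        = ∑ u, ∑ v, w u v * (x u * x u) := by
      refine Finset.sum_congr rfl fun u _ => ?_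
      rw [hw_diag, Finset.sum_mul]; ring
    rw [e1] at this
    linarith
  have hquad : ∑ u, ∑ v, w u v * (x u - x v)^2 = 0 := by
    have expand : ∀ u v : V, w u v * (x u - x v)^2 =
        w u v * (x u * x u) + w u v * (x v * x v) - w u v * (x u * x v)
          - w u v * (x u * x v) := fun u v => by ring
    simp_rw [expand, Finset.sum_sub_distrib, Finset.sum_add_distrib]
    have S2 : ∑ u, ∑ v, w u v * (x v * x v) = ∑ u, ∑ v, w u v * (x u * x u) :=
      swap_sum w hw_symm (fun a b => x b * x b)
    rw [S2]
    linarith [h2]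
  have hterm : ∀ u v : V, w u v * (x u - x v)^2 = 0 := by
    intro u v
    have houter := (Finset.sum_eq_zero_iff_of_nonneg (fun u _ =>
      Finset.sum_nonneg fun v _ => mul_nonneg (hw_nonneg u v) (sq_nonneg _))).mp hquad u
      (Finset.mem_univ u)
    exact (Finset.sum_eq_zero_iff_of_nonneg (fun v _ =>
      mul_nonneg (hw_nonneg u v) (sq_nonneg _))).mp houter v (Finset.mem_univ v)
  have hedge : ∀ u v : V, 0 < w u v → x u = x v := by
    intro u v hpos
    have := hterm u v
    have h2 : (x u - x v)^2 = 0 := by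
      rcases mul_eq_zero.mp this with h | h
      · exact absurd h (ne_of_gt hpos)
      · exact h
    have := pow_eq_zero_iff (n := 2) (by norm_num) |>.mp h2
    linarith [sub_eq_zero.mp this]
  intro u v
  obtain ⟨p⟩ := hconn.preconnected u v
  induction p with
  | nil => rfl
  | @cons a b c hab p ih =>
    rename' hab => h
    obtain ⟨hne, hor⟩ := (SimpleGraph.fromRel_adj _ _ _).mp h
    have : x a = x b := by
      rcases hor with hp | hp
      · exact hedge a b hp
      · exact (hedge b a hp).symm
    exact this.trans ih


variable [Fintype V] [DecidableEq V]


def Emat (T : Set V) [DecidablePred (· ∈ T)] : Matrix V {v // v ∈ T} ℝ :=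
  Matrix.of fun v t => if v = (t : V) then 1 else 0

noncomputable def Xmat (w : V → V → ℝ) (T : Set V) [DecidablePred (· ∈ T)] :
    Matrix {v // v ∉ T} {v // v ∈ T} ℝ :=
  -((blk (lap w) (fun v => v ∉ T) (fun v => v ∉ T))⁻¹ *
      blk (lap w) (fun v => v ∉ T) (· ∈ T))

noncomputable def Bmat (w : V → V → ℝ) (T : Set V) [DecidablePred (· ∈ T)] :
    Matrix V {v // v ∈ T} ℝ :=
  Matrix.of fun v t => if h : v ∈ T then (if v = (t : V) then 1 else 0) else Xmat w T ⟨v, h⟩ t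

lemma lap_split_row (w : V → V → ℝ) (hw_diag : ∀ u, w u u = 0) (T : Set V)
    [DecidablePred (· ∈ T)] (a : V) :
    ∑ t : {v // v ∈ T}, lap w a t.1 + ∑ s : {v // v ∉ T}, lap w a s.1 = 0 := by
  have := Fintype.sum_subtype_add_sum_subtype (· ∈ T) (fun v => lap w a v)
  rw [lap_rowsum w hw_diag a] at this
  exact this

lemma Xmat_rowsum (w : V → V → ℝ) (hw_diag : ∀ u, w u u = 0) (T : Set V)
    [DecidablePred (· ∈ T)]
    (hdet : IsUnit (blk (lap w) (fun v => v ∉ T) (fun v => v ∉ T)).det)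
    (s : {v // v ∉ T}) : ∑ t, Xmat w T s t = 1 := by
  set A := blk (lap w) (fun v => v ∉ T) (fun v => v ∉ T) with hA
  set C := blk (lap w) (fun v => v ∉ T) (· ∈ T) with hC
  have hCrow : ∀ s' : {v // v ∉ T}, ∑ t, C s' t = - ∑ s'', A s' s'' := by
    intro s'
    have := lap_split_row w hw_diag T s'.1
    have hc : ∀ t : {v // v ∈ T}, C s' t = lap w s'.1 t.1 := fun t => rfl
    have ha : ∀ s'' : {v // v ∉ T}, A s' s'' = lap w s'.1 s''.1 := fun s'' => rfl
    simp_rw [hc, ha]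
    linarith
  have e1 : ∑ t, Xmat w T s t = ∑ s', A⁻¹ s s' * (- ∑ t, C s' t) := by
    simp only [Xmat, ← hA, ← hC, Matrix.neg_apply, Matrix.mul_apply, mul_neg,
      Finset.mul_sum, Finset.sum_neg_distrib, neg_inj]
    exact Finset.sum_comm
  rw [e1]
  simp_rw [hCrow, neg_neg, Finset.mul_sum]
  rw [Finset.sum_comm]
  have e2 : ∀ s'', ∑ s', A⁻¹ s s' * A s' s'' = (A⁻¹ * A) s s'' :=
    fun s'' => (Matrix.mul_apply).symm
  simp_rw [e2, Matrix.nonsing_inv_mul A hdet, Matrix.one_apply]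
  simp

lemma Bmat_rowsum (w : V → V → ℝ) (hw_diag : ∀ u, w u u = 0) (T : Set V)
    [DecidablePred (· ∈ T)]
    (hdet : IsUnit (blk (lap w) (fun v => v ∉ T) (fun v => v ∉ T)).det)
    (v : V) : ∑ t, Bmat w T v t = 1 := by
  by_cases h : v ∈ T
  · simp only [Bmat, Matrix.of_apply, dif_pos h]
    rw [Finset.sum_eq_single (⟨v, h⟩ : {x // x ∈ T})]
    · simp
    · intro b _ hb
      rw [if_neg]
      intro hvb
      apply hb
      apply Subtype.ext
      exact hvb.symm
    · intro hn; exact absurd (Finset.mem_univ _) hn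
  · simp only [Bmat, Matrix.of_apply, dif_neg h]
    exact Xmat_rowsum w hw_diag T hdet ⟨v, h⟩

lemma lap_mul_Bmat (w : V → V → ℝ) (hw_diag : ∀ u, w u u = 0) (T : Set V)
    [DecidablePred (· ∈ T)]
    (hdet : IsUnit (blk (lap w) (fun v => v ∉ T) (fun v => v ∉ T)).det)
    (a : V) (t : {v // v ∈ T}) :
    (lap w * Bmat w T) a t =
      if ha : a ∈ T then SC (lap w) T ⟨a, ha⟩ t else 0 := by
  have hsplit := Fintype.sum_subtype_add_sum_subtype (· ∈ T)
    (fun v => lap w a v * Bmat w T v t)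
  have hmul : (lap w * Bmat w T) a t = ∑ v, lap w a v * Bmat w T v t := Matrix.mul_apply
  have hfirst : ∑ t' : {x // x ∈ T}, lap w a t'.1 * Bmat w T t'.1 t = lap w a t.1 := by
    have hB : ∀ t' : {x // x ∈ T}, Bmat w T t'.1 t = if t' = t then 1 else 0 := by
      intro t'
      simp only [Bmat, Matrix.of_apply, dif_pos t'.2]
      congr 1
      simp [Subtype.ext_iff]
    simp_rw [hB]
    rw [Finset.sum_eq_single t]
    · simp
    · intro b _ hb; simp [hb]
    · intro hn; exact absurd (Finset.mem_univ _) hn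
  have hXB : ∀ s : {x // x ∉ T}, Bmat w T s.1 t = Xmat w T s t := by
    intro s; simp only [Bmat, Matrix.of_apply, dif_neg s.2]
  by_cases ha : a ∈ T
  · rw [dif_pos ha, hmul, ← hsplit]
    have hsec : ∑ s : {x // x ∉ T}, lap w a s.1 * Bmat w T s.1 t =
        (blk (lap w) (· ∈ T) (fun v => v ∉ T) * Xmat w T) ⟨a, ha⟩ t := by
      rw [Matrix.mul_apply]
      exact Finset.sum_congr rfl fun s _ => by rw [hXB s]; rfl
    rw [hfirst, hsec]
    have : blk (lap w) (· ∈ T) (fun v => v ∉ T) * Xmat w T =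
        -(blk (lap w) (· ∈ T) (fun v => v ∉ T) *
          (blk (lap w) (fun v => v ∉ T) (fun v => v ∉ T))⁻¹ *
            blk (lap w) (fun v => v ∉ T) (· ∈ T)) := by
      rw [Xmat, Matrix.mul_neg, Matrix.mul_assoc]
    rw [this]
    simp only [SC, Matrix.sub_apply, Matrix.neg_apply]
    have : blk (lap w) (· ∈ T) (· ∈ T) ⟨a, ha⟩ t = lap w a t.1 := rfl
    rw [this]
    ring
  · rw [dif_neg ha, hmul, ← hsplit]
    have hsec : ∑ s : {x // x ∉ T}, lap w a s.1 * Bmat w T s.1 t =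
        (blk (lap w) (fun v => v ∉ T) (fun v => v ∉ T) * Xmat w T) ⟨a, ha⟩ t := by
      rw [Matrix.mul_apply]
      exact Finset.sum_congr rfl fun s _ => by rw [hXB s]; rfl
    have hAX : blk (lap w) (fun v => v ∉ T) (fun v => v ∉ T) * Xmat w T =
        -(blk (lap w) (fun v => v ∉ T) (· ∈ T)) := by
      rw [Xmat, Matrix.mul_neg, ← Matrix.mul_assoc, Matrix.mul_nonsing_inv _ hdet,
        Matrix.one_mul]
    rw [hfirst, hsec, hAX]
    have : (-(blk (lap w) (fun v => v ∉ T) (· ∈ T))) ⟨a, ha⟩ t = -(lap w a t.1) := rfl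
    rw [this]
    ring


end Aux


/-- Sum over the edges `{u,v}` (each counted once, since `w` is symmetric and each
ordered pair is counted twice) of the induced leverage score on the Schur complement
is at most `|T|`. -/
theorem sum_induced_leverage_le_card
    [Fintype V] [DecidableEq V]
    (w : V → V → ℝ) (hw_symm : ∀ u v, w u v = w v u) (hw_nonneg : ∀ u v, 0 ≤ w u v)
    (hw_diag : ∀ u, w u u = 0)
    (hconn : (SimpleGraph.fromRel fun u v => 0 < w u v).Connected)
    (T : Set V) [DecidablePred (· ∈ T)] (hT_ne : T.Nonempty) (hT_proper : T ≠ Set.univ)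
    (hSS : (blk (lap w) (fun v => v ∉ T) (fun v => v ∉ T)).PosDef)
    (Z : Matrix V V ℝ)
    (hZ1 : lap w * Z * lap w = lap w) (hZ2 : Z * lap w * Z = Z)
    (hZ3 : (lap w * Z)ᵀ = lap w * Z) (hZ4 : (Z * lap w)ᵀ = Z * lap w)
    (Mhat : Matrix V V ℝ)
    (hMhat : Mhat = Matrix.of fun a b =>
      if ha : a ∈ T then if hb : b ∈ T then SC (lap w) T ⟨a, ha⟩ ⟨b, hb⟩ else 0 else 0) :
    (1 / 2) * ∑ u, ∑ v, w u v *
        ((Pi.single u 1 - Pi.single v 1) ⬝ᵥ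
          (Z * Mhat * Z).mulVec (Pi.single u 1 - Pi.single v 1)) ≤
      (Fintype.card {v // v ∈ T} : ℝ) := by
  have hdet : IsUnit (blk (lap w) (fun v => v ∉ T) (fun v => v ∉ T)).det :=
    isUnit_iff_ne_zero.mpr (ne_of_gt hSS.det_pos)
  set Q : Matrix V V ℝ := 1 - Z * lap w with hQdef
  have hQ0 : lap w * Q = 0 := by
    rw [hQdef, Matrix.mul_sub, Matrix.mul_one, ← Matrix.mul_assoc, hZ1, sub_self]
  have hQcol : ∀ u a b, Q a u = Q b u := by
    intro u a b
    refine lap_kernel_const w hw_symm hw_nonneg hw_diag hconn (fun v => Q v u) ?_ a b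
    funext i
    have := congrFun (congrFun hQ0 i) u
    simpa [mulVec, dotProduct, Matrix.mul_apply] using this
  have hQsym : ∀ a b, Q a b = Q b a := by
    intro a b
    have h : Qᵀ = Q := by rw [hQdef, Matrix.transpose_sub, Matrix.transpose_one, hZ4]
    have := congrFun (congrFun h b) a
    simpa using this
  obtain ⟨a₀, ha₀⟩ := hT_ne
  have hQconst : ∀ a b, Q a b = Q a₀ a₀ := by
    intro a b
    rw [hQcol b a a₀, hQsym a₀ b, hQcol a₀ b a₀]
  have hQsum : ∑ u, Q a₀ u = 1 := by
    rw [hQdef]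
    simp only [Matrix.sub_apply, Matrix.one_apply, Finset.sum_sub_distrib]
    have h1 : ∑ u, (if a₀ = u then (1:ℝ) else 0) = 1 := by simp
    have h2 : ∑ u, (Z * lap w) a₀ u = 0 := by
      simp only [Matrix.mul_apply]
      rw [Finset.sum_comm]
      refine Finset.sum_eq_zero fun k _ => ?_
      rw [← Finset.mul_sum, lap_rowsum w hw_diag k, mul_zero]
    rw [h1, h2, sub_zero]
  have hcn : (Fintype.card V : ℝ) * Q a₀ a₀ = 1 := by
    have e : ∑ u : V, Q a₀ u = (Fintype.card V : ℝ) * Q a₀ a₀ := by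
      rw [Finset.sum_congr rfl fun u _ => hQconst a₀ u, Finset.sum_const, Finset.card_univ,
        nsmul_eq_mul]
    rw [← e]; exact hQsum
  have hMB : Mhat = lap w * Bmat w T * (Emat T)ᵀ := by
    rw [hMhat]
    ext a b
    simp only [Matrix.of_apply]
    rw [Matrix.mul_apply]
    by_cases hb : b ∈ T
    · rw [Finset.sum_eq_single (⟨b, hb⟩ : {x // x ∈ T})]
      · rw [lap_mul_Bmat w hw_diag T hdet a ⟨b, hb⟩]
        have hE : (Emat T)ᵀ (⟨b, hb⟩ : {x // x ∈ T}) b = 1 := by simp [Emat]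
        rw [hE, mul_one]
        by_cases ha : a ∈ T
        · rw [dif_pos ha, dif_pos hb, dif_pos ha]
        · rw [dif_neg ha, dif_neg ha]
      · intro t _ ht
        have hE : (Emat T)ᵀ t b = 0 := by
          simp only [Emat, Matrix.transpose_apply, Matrix.of_apply]
          rw [if_neg]
          intro h
          exact ht (Subtype.ext h.symm)
        rw [hE, mul_zero]
      · intro hn; exact absurd (Finset.mem_univ _) hn
    · have hL : (dite (a ∈ T) (fun ha =>
          dite (b ∈ T) (fun hb => SC (lap w) T ⟨a, ha⟩ ⟨b, hb⟩) (fun _ => 0)) (fun _ => 0) : ℝ)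
            = 0 := by
        by_cases ha : a ∈ T
        · rw [dif_pos ha, dif_neg hb]
        · rw [dif_neg ha]
      rw [hL]
      symm
      refine Finset.sum_eq_zero fun t _ => ?_
      have hE : (Emat T)ᵀ t b = 0 := by
        simp only [Emat, Matrix.transpose_apply, Matrix.of_apply]
        rw [if_neg]
        intro h
        exact hb (h ▸ t.2)
      rw [hE, mul_zero]
  have key := quad_eq_trace w hw_symm hw_diag (Z * Mhat * Z)
  rw [key]
  have t1 : trace (lap w * (Z * Mhat * Z)) = trace (Mhat * Z) := by
    have e1 : lap w * (Z * Mhat * Z) = (lap w * Z) * (Mhat * Z) := by noncomm_ring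
    have e2 : (Mhat * Z) * (lap w * Z) = Mhat * (Z * lap w * Z) := by noncomm_ring
    rw [e1, Matrix.trace_mul_comm, e2, hZ2]
  rw [t1, hMB]
  have t2 : trace (lap w * Bmat w T * (Emat T)ᵀ * Z) =
      trace ((Emat T)ᵀ * ((Z * lap w) * Bmat w T)) := by
    rw [Matrix.mul_assoc (lap w * Bmat w T) ((Emat T)ᵀ) Z, Matrix.trace_mul_comm,
      Matrix.mul_assoc ((Emat T)ᵀ) Z (lap w * Bmat w T), ← Matrix.mul_assoc Z (lap w) (Bmat w T)]
  rw [t2]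
  have hZL : Z * lap w = 1 - Q := by rw [hQdef, sub_sub_cancel]
  rw [hZL]
  have t3 : (Emat T)ᵀ * ((1 - Q) * Bmat w T) =
      (Emat T)ᵀ * Bmat w T - (Emat T)ᵀ * (Q * Bmat w T) := by
    rw [Matrix.sub_mul, Matrix.one_mul, Matrix.mul_sub]
  rw [t3, Matrix.trace_sub]
  have tEB : trace ((Emat T)ᵀ * Bmat w T) = (Fintype.card {v // v ∈ T} : ℝ) := by
    have hd : ∀ t : {v // v ∈ T}, ((Emat T)ᵀ * Bmat w T) t t = 1 := by
      intro t
      rw [Matrix.mul_apply, Finset.sum_eq_single (t.1)]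
      · have h1 : (Emat T)ᵀ t t.1 = 1 := by simp [Emat]
        have h2 : Bmat w T t.1 t = 1 := by simp [Bmat, t.2]
        rw [h1, h2, mul_one]
      · intro v _ hv
        have : (Emat T)ᵀ t v = 0 := by
          simp only [Emat, Matrix.transpose_apply, Matrix.of_apply]
          rw [if_neg hv]
        rw [this, zero_mul]
      · intro hn; exact absurd (Finset.mem_univ _) hn
    simp only [Matrix.trace, Matrix.diag]
    simp_rw [hd]
    simp
  have tEQB : trace ((Emat T)ᵀ * (Q * Bmat w T)) = 1 := by
    have hd : ∀ t : {v // v ∈ T}, ((Emat T)ᵀ * (Q * Bmat w T)) t t = (Q * Bmat w T) t.1 t := by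
      intro t
      rw [Matrix.mul_apply, Finset.sum_eq_single (t.1)]
      · have h1 : (Emat T)ᵀ t t.1 = 1 := by simp [Emat]
        rw [h1, one_mul]
      · intro v _ hv
        have : (Emat T)ᵀ t v = 0 := by
          simp only [Emat, Matrix.transpose_apply, Matrix.of_apply]
          rw [if_neg hv]
        rw [this, zero_mul]
      · intro hn; exact absurd (Finset.mem_univ _) hn
    simp only [Matrix.trace, Matrix.diag]
    simp_rw [hd, Matrix.mul_apply]
    have hQc : ∀ (t : {v // v ∈ T}) (v : V),
        Q t.1 v * Bmat w T v t = Q a₀ a₀ * Bmat w T v t := by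
      intro t v; rw [hQconst]
    simp_rw [hQc, ← Finset.mul_sum]
    rw [Finset.sum_comm]
    simp_rw [Bmat_rowsum w hw_diag T hdet]
    simp only [Finset.sum_const, Finset.card_univ, nsmul_eq_mul, mul_one]
    rw [mul_comm]
    exact hcn
  rw [tEB, tEQB]
  linarith
end

section
/- Let M = X + Y be a real n × n matrix, where X is diagonal with nonnegative entries and Y is symmetric with nonpositive off-diagonal entries and zero row sums (i.e. Y is the Laplacian of a weighted graph). If M is α-diagonally dominant for some α ≥ 0, then (α/2)·Y ⪯ X in the Loewner order. -/
open Matrix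

/-- `M` is α-diagonally dominant. -/
def IsAlphaDD {n : Type*} [Fintype n] [DecidableEq n] (α : ℝ) (M : Matrix n n ℝ) : Prop :=
  ∀ i, (1 + α) * ∑ j ∈ Finset.univ.erase i, |M i j| ≤ M i i

theorem alphaDD_diagonal_dominates_laplacian_part {n : Type*} [Fintype n] [DecidableEq n]
    (X Y M : Matrix n n ℝ) (hM : M = X + Y)
    (hX_diag : X.IsDiag) (hX_nonneg : ∀ i, 0 ≤ X i i)
    (hY_symm : Y.IsSymm) (hY_offdiag : ∀ i j, i ≠ j → Y i j ≤ 0)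
    (hY_rowsum : ∀ i, ∑ j, Y i j = 0)
    (α : ℝ) (hα : 0 ≤ α) (hDD : IsAlphaDD α M) :
    (X - (α / 2) • Y).PosSemidef := by
  -- diagonal of Y equals sum of negated off-diagonal entries
  have hYdd : ∀ i, Y i i = ∑ j ∈ Finset.univ.erase i, -(Y i j) := by
    intro i
    have h := hY_rowsum i
    rw [← Finset.add_sum_erase _ _ (Finset.mem_univ i)] at h
    rw [Finset.sum_neg_distrib]
    linarith
  -- α Y_ii ≤ X_ii
  have hkey : ∀ i, α * Y i i ≤ X i i := by
    intro i
    have hdd := hDD i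
    have h1 : ∑ j ∈ Finset.univ.erase i, |M i j| = Y i i := by
      rw [hYdd i]
      refine Finset.sum_congr rfl fun j hj => ?_
      have hji : j ≠ i := Finset.ne_of_mem_erase hj
      rw [hM]
      simp only [Matrix.add_apply, hX_diag hji.symm, zero_add]
      exact abs_of_nonpos (hY_offdiag i j hji.symm)
    have h2 : M i i = X i i + Y i i := by rw [hM]; simp [Matrix.add_apply]
    rw [h1, h2] at hdd
    nlinarith
  have hYii : ∀ i, 0 ≤ Y i i := by
    intro i
    rw [hYdd i]
    exact Finset.sum_nonneg fun j hj =>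
      neg_nonneg.2 (hY_offdiag i j (Finset.ne_of_mem_erase hj).symm)
  rw [posSemidef_iff_dotProduct_mulVec]
  constructor
  · -- Hermitian
    have : (X - (α / 2) • Y).IsSymm := by
      unfold Matrix.IsSymm
      rw [transpose_sub, transpose_smul, hX_diag.isSymm, hY_symm]
    rw [Matrix.IsHermitian, conjTranspose_eq_transpose_of_trivial]
    exact this
  · intro x
    have hstar : star x = x := by simp
    rw [hstar]
    have hgoal : dotProduct x ((X - (α / 2) • Y) *ᵥ x)
        = ∑ i, ∑ j, x i * ((X i j - α / 2 * Y i j) * x j) := by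
      simp [dotProduct, mulVec, Finset.mul_sum, Matrix.sub_apply, Matrix.smul_apply,
        smul_eq_mul]
    rw [hgoal]
    -- split off the diagonal
    have hsplit : ∀ i, ∑ j, x i * ((X i j - α / 2 * Y i j) * x j)
        = x i * ((X i i - α / 2 * Y i i) * x i)
          + ∑ j ∈ Finset.univ.erase i, (α / 2) * (-(Y i j)) * (x i * x j) := by
      intro i
      rw [← Finset.add_sum_erase _ _ (Finset.mem_univ i)]
      congr 1
      refine Finset.sum_congr rfl fun j hj => ?_
      have hji : j ≠ i := Finset.ne_of_mem_erase hj
      rw [hX_diag hji.symm]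
      ring
    simp only [hsplit]
    -- lower bound each off-diagonal term
    have hterm : ∀ i, ∀ j ∈ Finset.univ.erase i,
        -((α / 4) * (-(Y i j)) * (x i ^ 2 + x j ^ 2))
          ≤ (α / 2) * (-(Y i j)) * (x i * x j) := by
      intro i j hj
      have hw : 0 ≤ -(Y i j) := neg_nonneg.2 (hY_offdiag i j (Finset.ne_of_mem_erase hj).symm)
      nlinarith [sq_nonneg (x i + x j), mul_nonneg hα hw]
    -- the symmetric-sum identity
    have e1 : ∀ (f : n → n → ℝ), (∀ i, f i i = 0) →
        ∑ i, ∑ j ∈ Finset.univ.erase i, f i j = ∑ i, ∑ j, f i j := by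
      intro f hf
      exact Finset.sum_congr rfl fun i _ => (Finset.sum_erase _ (hf i))
    have hswap : ∑ i, ∑ j ∈ Finset.univ.erase i, (-(Y i j)) * x j ^ 2
        = ∑ i, ∑ j ∈ Finset.univ.erase i, (-(Y i j)) * x i ^ 2 := by
      calc ∑ i, ∑ j ∈ Finset.univ.erase i, (-(Y i j)) * x j ^ 2
          = ∑ i, ∑ j ∈ Finset.univ.erase i,
              (if j = i then 0 else (-(Y i j)) * x j ^ 2) :=
            Finset.sum_congr rfl fun i _ => Finset.sum_congr rfl fun j hj => by
              rw [if_neg (Finset.ne_of_mem_erase hj)]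
        _ = ∑ i, ∑ j, (if j = i then 0 else (-(Y i j)) * x j ^ 2) :=
            e1 _ (fun i => by simp)
        _ = ∑ j, ∑ i, (if j = i then 0 else (-(Y i j)) * x j ^ 2) := Finset.sum_comm
        _ = ∑ i, ∑ j, (if i = j then 0 else (-(Y j i)) * x i ^ 2) := rfl
        _ = ∑ i, ∑ j, (if j = i then 0 else (-(Y i j)) * x i ^ 2) := by
            refine Finset.sum_congr rfl fun i _ => Finset.sum_congr rfl fun j _ => ?_
            by_cases h : i = j
            · simp [h]
            · rw [if_neg h, if_neg (fun e => h e.symm), hY_symm.apply i j]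
        _ = ∑ i, ∑ j ∈ Finset.univ.erase i, (-(Y i j)) * x i ^ 2 := by
            rw [← e1 _ (fun i => by simp)]
            exact Finset.sum_congr rfl fun i _ => Finset.sum_congr rfl fun j hj => by
              rw [if_neg (Finset.ne_of_mem_erase hj)]
    have hsum : ∀ i, ∑ j ∈ Finset.univ.erase i, (α / 4) * (-(Y i j)) * (x i ^ 2 + x j ^ 2)
        = (α / 4) * ((∑ j ∈ Finset.univ.erase i, (-(Y i j)) * x i ^ 2)
            + ∑ j ∈ Finset.univ.erase i, (-(Y i j)) * x j ^ 2) := by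
      intro i
      rw [← Finset.sum_add_distrib, Finset.mul_sum]
      exact Finset.sum_congr rfl fun j _ => by ring
    have hdiagsum : ∀ i, ∑ j ∈ Finset.univ.erase i, (-(Y i j)) * x i ^ 2
        = Y i i * x i ^ 2 := by
      intro i
      rw [← Finset.sum_mul, ← hYdd]
    have hB : ∑ i, ∑ j ∈ Finset.univ.erase i, (-(Y i j)) * x j ^ 2
        = ∑ i, Y i i * x i ^ 2 := by
      rw [hswap]; exact Finset.sum_congr rfl fun i _ => hdiagsum i
    have hC : ∑ i, ∑ j ∈ Finset.univ.erase i, (α / 4) * (-(Y i j)) * (x i ^ 2 + x j ^ 2)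
        = (α / 2) * ∑ i, Y i i * x i ^ 2 := by
      simp only [hsum, hdiagsum]
      rw [← Finset.mul_sum, Finset.sum_add_distrib, hB]
      ring
    have hlow : 0 ≤ ∑ i, (x i * ((X i i - α / 2 * Y i i) * x i)
        - ∑ j ∈ Finset.univ.erase i, (α / 4) * (-(Y i j)) * (x i ^ 2 + x j ^ 2)) := by
      rw [Finset.sum_sub_distrib, hC]
      have hA : (α / 2) * ∑ i, Y i i * x i ^ 2
          ≤ ∑ i, x i * ((X i i - α / 2 * Y i i) * x i) := by
        rw [Finset.mul_sum]
        refine Finset.sum_le_sum fun i _ => ?_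
        nlinarith [mul_nonneg (sub_nonneg.2 (hkey i)) (sq_nonneg (x i))]
      linarith
    refine hlow.trans (Finset.sum_le_sum fun i _ => ?_)
    have h := Finset.sum_le_sum (hterm i)
    rw [Finset.sum_neg_distrib] at h
    linarith
end

section
/- Let X be a positive-definite diagonal real n × n matrix and let Y be a symmetric positive-semidefinite real n × n matrix with Y ⪯ β·X for some 0 < β < 1. Then for every odd positive integer k, the matrix Z^{(k)} := Σ_{i=0}^{k} X^{-1} (−Y X^{-1})^{i} is invertible and X + Y ⪯ (Z^{(k)})^{-1} ⪯ X + (1+δ)·Y in the Loewner order, where δ = β^{k} (1+β)/(1 − β^{k+1}). -/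
open Matrix

section Aux

variable {n : Type*} [Fintype n] [DecidableEq n]

lemma aux_conj_pow (E F A : Matrix n n ℝ) (hEF : E * F = 1) (hFE : F * E = 1) (i : ℕ) :
    (E * A * F) ^ i = E * A ^ i * F := by
  induction i with
  | zero => simpa using hEF.symm
  | succ m ih =>
      rw [pow_succ, pow_succ, ih]
      have h : E * A ^ m * F * (E * A * F) = E * A ^ m * ((F * E) * (A * F)) := by
        simp only [mul_assoc]
      rw [h, hFE, one_mul, ← mul_assoc, ← mul_assoc]

lemma aux_cfc_posSemidef {S : Matrix n n ℝ} (hS : S.IsHermitian) {f : ℝ → ℝ}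
    (hf : ∀ t ∈ spectrum ℝ S, 0 ≤ f t) : (cfc f S).PosSemidef := by
  rw [hS.cfc_eq f, Matrix.IsHermitian.cfc]
  have hD : (diagonal (RCLike.ofReal ∘ f ∘ hS.eigenvalues) : Matrix n n ℝ).PosSemidef := by
    rw [posSemidef_diagonal_iff]
    intro i
    exact hf _ (hS.eigenvalues_mem_spectrum_real i)
  have := hD.mul_mul_conjTranspose_same (hS.eigenvectorUnitary : Matrix n n ℝ)
  rwa [← star_eq_conjTranspose] at this

lemma aux_spectrum_nonneg {M : Matrix n n ℝ} (hM : M.PosSemidef) :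
    ∀ t ∈ spectrum ℝ M, 0 ≤ t := by
  rw [hM.isHermitian.spectrum_real_eq_range_eigenvalues]
  rintro t ⟨i, rfl⟩
  exact hM.eigenvalues_nonneg i

lemma aux_upper_key (k : ℕ) (β t δ : ℝ) (hβ0 : 0 < β) (hβ1 : β < 1) (ht0 : 0 ≤ t) (htβ : t ≤ β)
    (hδ0 : 0 ≤ δ) (hδ : δ * (1 - β ^ (k+1)) = β ^ k * (1 + β)) :
    1 + t ≤ (1 + (1+δ) * t) * (1 - t ^ (k+1)) := by
  have h1 : t ^ k ≤ β ^ k := pow_le_pow_left₀ ht0 htβ _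
  have h2 : t ^ k * (1 + (1+δ)*t) ≤ β ^ k * (1 + (1+δ)*β) := by
    apply mul_le_mul h1 (by nlinarith) (by nlinarith) (by positivity)
  have h3 : β ^ k * (1 + (1+δ)*β) = δ := by
    rw [pow_succ] at hδ; linear_combination -hδ
  have h4 : t ^ k * (1 + (1+δ)*t) ≤ δ := h2.trans h3.le
  have h5 := mul_le_mul_of_nonneg_left h4 ht0
  rw [pow_succ]
  nlinarith

end Aux

theorem jacobi_operator_bounds {n : Type*} [Fintype n] [DecidableEq n]
    (X Y : Matrix n n ℝ) (hX : X.PosDef) (hX_diag : X.IsDiag)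
    (hY : Y.PosSemidef) (β : ℝ) (hβ0 : 0 < β) (hβ1 : β < 1)
    (hYX : (β • X - Y).PosSemidef)
    (k : ℕ) (hk_odd : Odd k) (hk_pos : 0 < k) :
    IsUnit (∑ i ∈ Finset.range (k + 1), X⁻¹ * (-(Y * X⁻¹)) ^ i) ∧
    ((∑ i ∈ Finset.range (k + 1), X⁻¹ * (-(Y * X⁻¹)) ^ i)⁻¹ - (X + Y)).PosSemidef ∧
    (X + (1 + β ^ k * (1 + β) / (1 - β ^ (k + 1))) • Y -
        (∑ i ∈ Finset.range (k + 1), X⁻¹ * (-(Y * X⁻¹)) ^ i)⁻¹).PosSemidef := by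
  classical
  -- diagonal entries of X are positive
  have hXii : ∀ i, 0 < X i i := by
    intro i
    have h1 : (Pi.single i 1 : n → ℝ) ≠ 0 := by
      intro h
      have := congrFun h i
      simp [Pi.single_eq_same] at this
    have := hX.dotProduct_mulVec_pos h1
    simpa [dotProduct, mulVec, Pi.single_apply] using this
  set d : n → ℝ := fun i => Real.sqrt (X i i) with hd_def
  have hd0 : ∀ i, 0 < d i := fun i => Real.sqrt_pos.mpr (hXii i)
  set E : Matrix n n ℝ := diagonal d with hE_def
  set F : Matrix n n ℝ := diagonal (fun i => (d i)⁻¹) with hF_def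
  have hEF : E * F = 1 := by
    rw [hE_def, hF_def, diagonal_mul_diagonal, ← diagonal_one]
    exact congrArg Matrix.diagonal (funext fun i => mul_inv_cancel₀ (hd0 i).ne')
  have hFE : F * E = 1 := by
    rw [hE_def, hF_def, diagonal_mul_diagonal, ← diagonal_one]
    exact congrArg Matrix.diagonal (funext fun i => inv_mul_cancel₀ (hd0 i).ne')
  have hEherm : Eᴴ = E := by
    rw [hE_def, diagonal_conjTranspose]
    congr
  have hFherm : Fᴴ = F := by
    rw [hF_def, diagonal_conjTranspose]
    congr
  have hX_eq : X = E * E := by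
    have hXdiag : X = diagonal (fun i => X i i) := by
      ext i j
      by_cases h : i = j
      · subst h; simp
      · simp [diagonal_apply_ne _ h, hX_diag h]
    rw [hE_def, diagonal_mul_diagonal, hXdiag]
    exact congrArg Matrix.diagonal (funext fun i => (Real.mul_self_sqrt (hXii i).le).symm)
  have hXinv : X⁻¹ = F * F := by
    apply Matrix.inv_eq_right_inv
    have : X * (F * F) = E * ((E * F) * F) := by rw [hX_eq]; simp only [mul_assoc]
    rw [this, hEF, one_mul, hEF]
  set S : Matrix n n ℝ := F * Y * F with hS_def
  have hSherm : S.IsHermitian := by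
    show Sᴴ = S
    rw [hS_def]
    simp only [conjTranspose_mul, hFherm, hY.isHermitian.eq, mul_assoc]
  have hsa : IsSelfAdjoint S := hSherm
  have hc : ∀ f : ℝ → ℝ, ContinuousOn f (spectrum ℝ S) :=
    fun f => (Matrix.finite_real_spectrum (A := S)).continuousOn f
  have hconjE : ∀ {A : Matrix n n ℝ}, A.PosSemidef → (E * A * E).PosSemidef := by
    intro A hA
    have := hA.mul_mul_conjTranspose_same E
    rwa [hEherm] at this
  have hconjF : ∀ {A : Matrix n n ℝ}, A.PosSemidef → (F * A * F).PosSemidef := by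
    intro A hA
    have := hA.mul_mul_conjTranspose_same F
    rwa [hFherm] at this
  have hS_psd : S.PosSemidef := hconjF hY
  have hFXF : F * X * F = 1 := by
    have : F * X * F = (F * E) * (E * F) := by rw [hX_eq]; simp only [mul_assoc]
    rw [this, hFE, hEF, one_mul]
  have hbS : (β • (1 : Matrix n n ℝ) - S).PosSemidef := by
    have h1 : F * (β • X - Y) * F = β • (1 : Matrix n n ℝ) - S := by
      rw [Matrix.mul_sub, Matrix.sub_mul, hS_def]
      congr 1
      rw [mul_smul_comm, smul_mul_assoc, hFXF]
    rw [← h1]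
    exact hconjF hYX
  -- spectrum of S lies in [0, β]
  have hcfcb : cfc (fun t : ℝ => β - t) S = β • (1 : Matrix n n ℝ) - S := by
    rw [cfc_sub _ _ _ (hc _) (hc _), cfc_id' ℝ S hsa, cfc_const β S hsa,
      Algebra.algebraMap_eq_smul_one]
  have hspec : ∀ t ∈ spectrum ℝ S, 0 ≤ t ∧ t ≤ β := by
    intro t ht
    refine ⟨aux_spectrum_nonneg hS_psd t ht, ?_⟩
    have hmem : β - t ∈ spectrum ℝ (β • (1 : Matrix n n ℝ) - S) := by
      rw [← hcfcb, cfc_map_spectrum _ _ hsa (hc _)]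
      exact ⟨t, ht, rfl⟩
    have := aux_spectrum_nonneg hbS _ hmem
    linarith
  -- the polynomial p
  set p : ℝ → ℝ := fun t => ∑ i ∈ Finset.range (k+1), (-t) ^ i with hp_def
  have hpmul : ∀ t : ℝ, (1 + t) * p t = 1 - t ^ (k+1) := by
    intro t
    have h := geom_sum_mul (-t) (k+1)
    have he : (-t) ^ (k+1) = t ^ (k+1) := (hk_odd.add_one).neg_pow t
    rw [he] at h
    rw [hp_def]
    linear_combination -h
  have hden_pos : ∀ t : ℝ, 0 ≤ t → t ≤ β → 0 < 1 - t ^ (k+1) := by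
    intro t ht0 htβ
    have h1 : t ^ (k+1) ≤ β ^ (k+1) := pow_le_pow_left₀ ht0 htβ _
    have h2 : β ^ (k+1) < 1 := pow_lt_one₀ hβ0.le hβ1 (Nat.succ_ne_zero k)
    linarith
  have hp_pos : ∀ t ∈ spectrum ℝ S, 0 < p t := by
    intro t ht
    obtain ⟨ht0, htβ⟩ := hspec t ht
    have hden := hden_pos t ht0 htβ
    have h1t : 0 < 1 + t := by linarith
    nlinarith [hpmul t]
  have hpinv : ∀ t ∈ spectrum ℝ S, (p t)⁻¹ = (1 + t) / (1 - t ^ (k+1)) := by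
    intro t ht
    obtain ⟨ht0, htβ⟩ := hspec t ht
    have hden := hden_pos t ht0 htβ
    rw [eq_div_iff hden.ne', ← hpmul t]
    field_simp [(hp_pos t ht).ne']
  set W : Matrix n n ℝ := cfc p S with hW_def
  set q : ℝ → ℝ := fun t => (p t)⁻¹ with hq_def
  set W' : Matrix n n ℝ := cfc q S with hW'_def
  have hWW' : W * W' = 1 := by
    rw [hW_def, hW'_def, ← cfc_mul _ _ _ (hc _) (hc _),
      cfc_congr (g := fun _ => 1) (fun t ht => by
        simp only [hq_def]
        field_simp [(hp_pos t ht).ne'])]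
    exact cfc_const_one ℝ S hsa
  have hW'W : W' * W = 1 := by
    rw [hW'_def, hW_def, ← cfc_mul _ _ _ (hc _) (hc _),
      cfc_congr (g := fun _ => 1) (fun t ht => by
        simp only [hq_def]
        field_simp [(hp_pos t ht).ne'])]
    exact cfc_const_one ℝ S hsa
  have hWsum : W = ∑ i ∈ Finset.range (k+1), (-S) ^ i := by
    rw [hW_def, hp_def]
    have h1 : (fun t : ℝ => ∑ i ∈ Finset.range (k+1), (-t) ^ i)
        = ∑ i ∈ Finset.range (k+1), (fun t : ℝ => (-t) ^ i) := by
      ext t; simp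
    rw [h1, cfc_sum _ _ _ (fun i _ => hc _)]
    refine Finset.sum_congr rfl fun i _ => ?_
    rw [cfc_pow _ _ S (hc _) hsa, cfc_neg_id S hsa]
  -- identity for the truncated Neumann sum
  have hZ : (∑ i ∈ Finset.range (k + 1), X⁻¹ * (-(Y * X⁻¹)) ^ i) = F * W * F := by
    have hYX' : -(Y * X⁻¹) = E * (-S) * F := by
      rw [hXinv, hS_def]
      simp only [mul_neg, neg_mul, neg_inj]
      have : E * (F * Y * F) * F = (E * F) * (Y * (F * F)) := by simp only [mul_assoc]
      rw [this, hEF, one_mul]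
    have hterm : ∀ i, X⁻¹ * (-(Y * X⁻¹)) ^ i = F * (-S) ^ i * F := by
      intro i
      rw [hYX', aux_conj_pow E F (-S) hEF hFE, hXinv]
      have : F * F * (E * (-S) ^ i * F) = F * ((F * E) * ((-S) ^ i * F)) := by
        simp only [mul_assoc]
      rw [this, hFE, one_mul, ← mul_assoc]
    calc (∑ i ∈ Finset.range (k + 1), X⁻¹ * (-(Y * X⁻¹)) ^ i)
        = ∑ i ∈ Finset.range (k + 1), F * (-S) ^ i * F := by
          exact Finset.sum_congr rfl fun i _ => hterm i
      _ = F * (∑ i ∈ Finset.range (k + 1), (-S) ^ i) * F := by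
          rw [← Finset.sum_mul, ← Finset.mul_sum]
      _ = F * W * F := by rw [hWsum]
  have hFunit : IsUnit F := ⟨⟨F, E, hFE, hEF⟩, rfl⟩
  have hWunit : IsUnit W := ⟨⟨W, W', hWW', hW'W⟩, rfl⟩
  have hgoal1 : IsUnit (∑ i ∈ Finset.range (k + 1), X⁻¹ * (-(Y * X⁻¹)) ^ i) := by
    rw [hZ]
    exact (hFunit.mul hWunit).mul hFunit
  have hZinv : (∑ i ∈ Finset.range (k + 1), X⁻¹ * (-(Y * X⁻¹)) ^ i)⁻¹ = E * W' * E := by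
    apply Matrix.inv_eq_right_inv
    rw [hZ]
    calc F * W * F * (E * W' * E) = F * (W * ((F * E) * W') * E) := by simp only [mul_assoc]
      _ = F * (W * W' * E) := by rw [hFE, one_mul]
      _ = F * E := by rw [hWW', one_mul]
      _ = 1 := hFE
  have hESE : E * S * E = Y := by
    rw [hS_def]
    have h : E * (F * Y * F) * E = (E * F) * (Y * (F * E)) := by simp only [mul_assoc]
    rw [h, hEF, hFE, one_mul, mul_one]
  -- lower bound
  have hg1 : cfc (fun t : ℝ => q t - 1 - t) S = W' - 1 - S := by
    rw [cfc_sub _ _ _ (hc _) (hc _), cfc_sub _ _ _ (hc _) (hc _), cfc_const_one ℝ S hsa,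
      cfc_id' ℝ S hsa]
  have hgoal2 : ((∑ i ∈ Finset.range (k + 1), X⁻¹ * (-(Y * X⁻¹)) ^ i)⁻¹ - (X + Y)).PosSemidef := by
    have hEq2 : (∑ i ∈ Finset.range (k + 1), X⁻¹ * (-(Y * X⁻¹)) ^ i)⁻¹ - (X + Y)
        = E * (cfc (fun t : ℝ => q t - 1 - t) S) * E := by
      rw [hg1, hZinv]
      have h : E * (W' - 1 - S) * E = E * W' * E - E * E - E * S * E := by noncomm_ring
      rw [h, ← hX_eq, hESE]
      abel
    rw [hEq2]
    apply hconjE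
    apply aux_cfc_posSemidef hSherm
    intro t ht
    obtain ⟨ht0, htβ⟩ := hspec t ht
    have hden := hden_pos t ht0 htβ
    have hqt : q t = (1 + t) / (1 - t ^ (k+1)) := hpinv t ht
    have h2 : 1 + t ≤ (1 + t) / (1 - t ^ (k+1)) := by
      rw [le_div_iff₀ hden]
      nlinarith [pow_nonneg ht0 (k+1)]
    rw [hqt]
    linarith
  -- upper bound
  set δ : ℝ := β ^ k * (1 + β) / (1 - β ^ (k + 1)) with hδ_def
  have hdenβ : 0 < 1 - β ^ (k+1) := hden_pos β hβ0.le le_rfl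
  have hδ0 : 0 ≤ δ := div_nonneg (by positivity) hdenβ.le
  have hδeq : δ * (1 - β ^ (k+1)) = β ^ k * (1 + β) := by
    rw [hδ_def]
    field_simp
  have hg2 : cfc (fun t : ℝ => 1 + (1 + δ) * t - q t) S = 1 + (1 + δ) • S - W' := by
    rw [cfc_sub _ _ _ (hc _) (hc _), cfc_const_add 1 _ S (hc _) hsa,
      cfc_const_mul_id _ S hsa, Algebra.algebraMap_eq_smul_one, one_smul]
  have hgoal3 : (X + (1 + δ) • Y -
      (∑ i ∈ Finset.range (k + 1), X⁻¹ * (-(Y * X⁻¹)) ^ i)⁻¹).PosSemidef := by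
    have hEq3 : X + (1 + δ) • Y - (∑ i ∈ Finset.range (k + 1), X⁻¹ * (-(Y * X⁻¹)) ^ i)⁻¹
        = E * (cfc (fun t : ℝ => 1 + (1 + δ) * t - q t) S) * E := by
      rw [hg2, hZinv]
      have h : E * (1 + (1 + δ) • S - W') * E
          = E * E + (1 + δ) • (E * S * E) - E * W' * E := by
        simp only [Matrix.mul_sub, Matrix.sub_mul, Matrix.mul_add, Matrix.add_mul, mul_one,
          mul_smul_comm, smul_mul_assoc, one_mul]
      rw [h, ← hX_eq, hESE]
    rw [hEq3]
    apply hconjE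
    apply aux_cfc_posSemidef hSherm
    intro t ht
    obtain ⟨ht0, htβ⟩ := hspec t ht
    have hden := hden_pos t ht0 htβ
    have hqt : q t = (1 + t) / (1 - t ^ (k+1)) := hpinv t ht
    have key := aux_upper_key k β t δ hβ0 hβ1 ht0 htβ hδ0 hδeq
    have h2 : (1 + t) / (1 - t ^ (k+1)) ≤ 1 + (1 + δ) * t := by
      rw [div_le_iff₀ hden]
      linarith
    rw [hqt]
    linarith
  exact ⟨hgoal1, hgoal2, hgoal3⟩
end

section
/- Let A and B be real symmetric matrices indexed by V × V with A ⪯ B in the Loewner order, let T ⊆ V with complement S = V ∖ T, and assume both principal submatrices A_{SS} and B_{SS} are positive definite. Then SC(A,T) ⪯ SC(B,T) in the Loewner order. -/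
open Matrix

variable {V : Type*}

private def ind [DecidableEq V] (P : V → Prop) : Matrix V {v // P v} ℝ :=
  Matrix.of fun v a => if v = ↑a then 1 else 0

private lemma ind_blk [Fintype V] [DecidableEq V] (M : Matrix V V ℝ) (P Q : V → Prop)
    [Fintype {v // P v}] [Fintype {v // Q v}] :
    (ind P)ᵀ * (M * ind Q) = blk M P Q := by
  ext a b
  simp [ind, blk, Matrix.mul_apply, mul_ite, ite_mul, Finset.sum_ite_eq, Finset.sum_ite_eq']

private lemma ind_blk' [Fintype V] [DecidableEq V] (M : Matrix V V ℝ) (P Q : V → Prop)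
    [Fintype {v // P v}] [Fintype {v // Q v}] {n : Type*} [Fintype n]
    (X : Matrix {v // Q v} n ℝ) :
    (ind P)ᵀ * (M * (ind Q * X)) = blk M P Q * X := by
  rw [← Matrix.mul_assoc M, ← Matrix.mul_assoc ((ind P)ᵀ), ind_blk]

private lemma blk_transpose (M : Matrix V V ℝ) (hM : M.IsSymm) (P Q : V → Prop) :
    (blk M P Q)ᵀ = blk M Q P := by
  ext a b
  exact hM.apply _ _

private lemma conj_expand [Fintype V] [DecidableEq V] (M : Matrix V V ℝ) (T : Set V)
    [DecidablePred (· ∈ T)] (Y : Matrix {v // v ∉ T} {v // v ∈ T} ℝ) :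
    (ind (· ∈ T) + ind (fun v => v ∉ T) * Y)ᵀ * M * (ind (· ∈ T) + ind (fun v => v ∉ T) * Y) =
      blk M (· ∈ T) (· ∈ T) + blk M (· ∈ T) (fun v => v ∉ T) * Y +
        Yᵀ * blk M (fun v => v ∉ T) (· ∈ T) +
        Yᵀ * (blk M (fun v => v ∉ T) (fun v => v ∉ T) * Y) := by
  simp only [transpose_add, transpose_mul, Matrix.add_mul, Matrix.mul_add, Matrix.mul_assoc]
  rw [ind_blk, ind_blk', ind_blk, ind_blk']
  abel

set_option maxHeartbeats 1600000 in
theorem schur_complement_monotone [Fintype V] [DecidableEq V]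
    (A B : Matrix V V ℝ) (hA : A.IsSymm) (hB : B.IsSymm)
    (hAB : (B - A).PosSemidef)
    (T : Set V) [DecidablePred (· ∈ T)]
    (hASS : (blk A (fun v => v ∉ T) (fun v => v ∉ T)).PosDef)
    (hBSS : (blk B (fun v => v ∉ T) (fun v => v ∉ T)).PosDef) :
    (SC B T - SC A T).PosSemidef := by
  classical
  set AS := blk A (fun v => v ∉ T) (fun v => v ∉ T) with hASdef
  set AST := blk A (fun v => v ∉ T) (· ∈ T) with hASTdef
  set BS := blk B (fun v => v ∉ T) (fun v => v ∉ T) with hBSdef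
  set BST := blk B (fun v => v ∉ T) (· ∈ T) with hBSTdef
  set YA := -(AS⁻¹ * AST) with hYAdef
  set YB := -(BS⁻¹ * BST) with hYBdef
  set e := ind (V := V) (· ∈ T) with hedef
  set f := ind (V := V) (fun v => v ∉ T) with hfdef
  -- invertibility facts
  have hAdet : IsUnit AS.det := (Matrix.isUnit_iff_isUnit_det _).1 hASS.isUnit
  have hBdet : IsUnit BS.det := (Matrix.isUnit_iff_isUnit_det _).1 hBSS.isUnit
  -- symmetry facts
  have hAsymm : ASᵀ = AS := blk_transpose A hA _ _
  have hBsymm : BSᵀ = BS := blk_transpose B hB _ _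
  have hAinvT : (AS⁻¹)ᵀ = AS⁻¹ := by rw [Matrix.transpose_nonsing_inv, hAsymm]
  have hBinvT : (BS⁻¹)ᵀ = BS⁻¹ := by rw [Matrix.transpose_nonsing_inv, hBsymm]
  have hATS : blk A (· ∈ T) (fun v => v ∉ T) = ASTᵀ := (blk_transpose A hA _ _).symm
  have hBTS : blk B (· ∈ T) (fun v => v ∉ T) = BSTᵀ := (blk_transpose B hB _ _).symm
  -- key algebraic facts about Y
  have hASYA : AS * YA = -AST := by
    rw [hYAdef, Matrix.mul_neg, ← Matrix.mul_assoc, Matrix.mul_nonsing_inv _ hAdet, Matrix.one_mul]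
  have hBSYB : BS * YB = -BST := by
    rw [hYBdef, Matrix.mul_neg, ← Matrix.mul_assoc, Matrix.mul_nonsing_inv _ hBdet, Matrix.one_mul]
  have hYAT : YAᵀ = -(ASTᵀ * AS⁻¹) := by
    rw [hYAdef, transpose_neg, transpose_mul, hAinvT]
  have hYBT : YBᵀ = -(BSTᵀ * BS⁻¹) := by
    rw [hYBdef, transpose_neg, transpose_mul, hBinvT]
  -- Claim 1 (for B): PBᵀ B PB = SC B T
  have claimB : (e + f * YB)ᵀ * B * (e + f * YB) = SC B T := by
    rw [hedef, hfdef, conj_expand, hBSYB, hYBT, SC, hBTS, hYBdef]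
    rw [← hBSdef, ← hBSTdef]
    simp only [Matrix.neg_mul, Matrix.mul_neg, Matrix.mul_assoc]
    abel
  -- Claim 1 (for A): PAᵀ A PA = SC A T
  have claimA : (e + f * YA)ᵀ * A * (e + f * YA) = SC A T := by
    rw [hedef, hfdef, conj_expand, hASYA, hYAT, SC, hATS, hYAdef]
    rw [← hASdef, ← hASTdef]
    simp only [Matrix.neg_mul, Matrix.mul_neg, Matrix.mul_assoc]
    abel
  -- Claim 2: PBᵀ A PB - SC A T = (YB - YA)ᵀ (AS (YB - YA))
  have claim2 : (e + f * YB)ᵀ * A * (e + f * YB) - SC A T =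
      (YB - YA)ᵀ * (AS * (YB - YA)) := by
    have hcanc1 : ∀ (Z : Matrix {v // v ∉ T} {v // v ∈ T} ℝ), AS * (AS⁻¹ * Z) = Z := by
      intro Z; rw [← Matrix.mul_assoc, Matrix.mul_nonsing_inv _ hAdet, Matrix.one_mul]
    have hcanc2 : ∀ (Z : Matrix {v // v ∉ T} {v // v ∈ T} ℝ), AS⁻¹ * (AS * Z) = Z := by
      intro Z; rw [← Matrix.mul_assoc, Matrix.nonsing_inv_mul _ hAdet, Matrix.one_mul]
    rw [hedef, hfdef, conj_expand, ← claimA, hedef, hfdef, conj_expand]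
    rw [← hASdef, ← hASTdef, hATS]
    simp only [hYAdef, transpose_neg, transpose_mul, transpose_sub, transpose_add, hAinvT, hAsymm,
      sub_neg_eq_add, Matrix.mul_sub, Matrix.sub_mul, Matrix.mul_add, Matrix.add_mul,
      Matrix.mul_neg, Matrix.neg_mul, neg_neg, Matrix.mul_assoc, hcanc1, hcanc2]
    abel
  -- put it together
  have hsplit : SC B T - SC A T =
      (e + f * YB)ᵀ * (B - A) * (e + f * YB) + (YB - YA)ᵀ * (AS * (YB - YA)) := by
    rw [← claim2, ← claimB]
    rw [Matrix.mul_sub, Matrix.sub_mul]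
    abel
  rw [hsplit]
  have h1 : ((e + f * YB)ᵀ * (B - A) * (e + f * YB)).PosSemidef := by
    have := hAB.conjTranspose_mul_mul_same (e + f * YB)
    have hc : (e + f * YB)ᴴ = (e + f * YB)ᵀ := by
      ext i j; simp [Matrix.conjTranspose_apply]
    rwa [hc] at this
  have h2 : ((YB - YA)ᵀ * (AS * (YB - YA))).PosSemidef := by
    have := hASS.posSemidef.conjTranspose_mul_mul_same (YB - YA)
    have hc : (YB - YA)ᴴ = (YB - YA)ᵀ := by
      ext i j; simp [Matrix.conjTranspose_apply]
    rw [hc, Matrix.mul_assoc] at this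
    exact this
  exact h1.add h2
end

section
/- Let G be a connected weighted graph on a finite vertex set V with Laplacian L, let T be a nonempty proper subset of V with complement S = V ∖ T, and assume L_{SS} is positive definite, so that SC(L,T) is defined. Let Z be a Moore–Penrose pseudoinverse of L. Then SC(L,T) · Z_{[T,T]} · SC(L,T) = SC(L,T), where Z_{[T,T]} denotes the T × T principal submatrix of Z. -/
open Matrix

variable {V : Type*}

theorem schur_complement_pseudoinverse_identity [Fintype V] [DecidableEq V]
    (w : V → V → ℝ) (hw_symm : ∀ u v, w u v = w v u) (hw_nonneg : ∀ u v, 0 ≤ w u v)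
    (hw_diag : ∀ u, w u u = 0)
    (hconn : (SimpleGraph.fromRel fun u v => 0 < w u v).Connected)
    (T : Set V) [DecidablePred (· ∈ T)] (hT_ne : T.Nonempty) (hT_proper : T ≠ Set.univ)
    (hSS : (blk (lap w) (fun v => v ∉ T) (fun v => v ∉ T)).PosDef)
    (Z : Matrix V V ℝ)
    (hZ1 : lap w * Z * lap w = lap w) (hZ2 : Z * lap w * Z = Z)
    (hZ3 : (lap w * Z)ᵀ = lap w * Z) (hZ4 : (Z * lap w)ᵀ = Z * lap w) :
    SC (lap w) T * blk Z (· ∈ T) (· ∈ T) * SC (lap w) T = SC (lap w) T := by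
  classical
  set L := lap w with hLdef
  have hLsym : Lᵀ = L := by
    ext u v
    rcases eq_or_ne u v with h | h
    · simp [hLdef, lap, h]
    · simp [hLdef, lap, Matrix.transpose_apply, h, Ne.symm h, hw_symm u v]
  set A := blk L (· ∈ T) (· ∈ T) with hA
  set B := blk L (· ∈ T) (fun v => v ∉ T) with hB
  set C := blk L (fun v => v ∉ T) (· ∈ T) with hC
  set D := blk L (fun v => v ∉ T) (fun v => v ∉ T) with hD
  have hDdet : IsUnit D.det := hSS.det_pos.ne'.isUnit
  have hDinv : D * D⁻¹ = 1 := Matrix.mul_nonsing_inv D hDdet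
  have hsymm : ∀ u v : V, L u v = L v u := fun u v => congrFun (congrFun hLsym v) u
  have hAsym : Aᵀ = A := by
    ext a b; exact hsymm b.1 a.1
  have hDsym : Dᵀ = D := by
    ext a b; exact hsymm b.1 a.1
  have hCB : Cᵀ = B := by
    ext a b; exact hsymm b.1 a.1
  have hBC : Bᵀ = C := by
    ext a b; exact hsymm b.1 a.1
  have hDinvsym : (D⁻¹)ᵀ = D⁻¹ := by
    rw [Matrix.transpose_nonsing_inv, hDsym]
  set SCm := A - B * D⁻¹ * C with hSCm
  have hSC : SC L T = SCm := by
    rw [hSCm, hA, hB, hC, hD]; rfl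
  have hSCsym : SCmᵀ = SCm := by
    rw [hSCm, Matrix.transpose_sub, hAsym, Matrix.transpose_mul, Matrix.transpose_mul,
      hDinvsym, hCB, hBC, Matrix.mul_assoc]
  set e : {v // v ∈ T} ⊕ {v // v ∉ T} ≃ V := Equiv.sumCompl (· ∈ T) with he
  set L' := L.submatrix e e with hL'
  set Z' := Z.submatrix e e with hZ'
  have hblock : L' = Matrix.fromBlocks A B C D := by
    ext i j
    cases i <;> cases j <;> rfl
  have hZblock : Z' = Matrix.fromBlocks (blk Z (· ∈ T) (· ∈ T)) (blk Z (· ∈ T) (fun v => v ∉ T))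
      (blk Z (fun v => v ∉ T) (· ∈ T)) (blk Z (fun v => v ∉ T) (fun v => v ∉ T)) := by
    ext i j
    cases i <;> cases j <;> rfl
  have hZ1' : L' * Z' * L' = L' := by
    rw [hL', hZ', Matrix.submatrix_mul_equiv, Matrix.submatrix_mul_equiv, hZ1]
  have hL'sym : L'ᵀ = L' := by
    rw [hL', Matrix.transpose_submatrix, hLsym]
  -- block scaffolding
  set ι : Matrix ({v // v ∈ T} ⊕ {v // v ∉ T}) ({v // v ∈ T} ⊕ {v // v ∉ T}) ℝ :=
    Matrix.fromBlocks 1 0 0 0 with hι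
  set X : Matrix ({v // v ∈ T} ⊕ {v // v ∉ T}) ({v // v ∈ T} ⊕ {v // v ∉ T}) ℝ :=
    Matrix.fromBlocks 1 0 (-(D⁻¹ * C)) 0 with hX
  set G : Matrix ({v // v ∈ T} ⊕ {v // v ∉ T}) ({v // v ∈ T} ⊕ {v // v ∉ T}) ℝ :=
    Matrix.fromBlocks SCm 0 0 0 with hG
  have hLX : L' * X = G := by
    rw [hblock, hX, hG, Matrix.fromBlocks_multiply]
    simp [Matrix.mul_neg, ← Matrix.mul_assoc, hDinv, hSCm, sub_eq_add_neg]
  have hGsym : Gᵀ = G := by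
    rw [hG, Matrix.fromBlocks_transpose, hSCsym]
    simp
  have hXG : Xᵀ * L' = G := by
    calc Xᵀ * L' = Xᵀ * L'ᵀ := by rw [hL'sym]
    _ = (L' * X)ᵀ := by rw [Matrix.transpose_mul]
    _ = G := by rw [hLX, hGsym]
  have hιG : ι * G = G := by
    rw [hι, hG, Matrix.fromBlocks_multiply]; simp
  have hGι : G * ι = G := by
    rw [hι, hG, Matrix.fromBlocks_multiply]; simp
  have hXι : Xᵀ * ι = ι := by
    rw [hX, hι, Matrix.fromBlocks_transpose, Matrix.fromBlocks_multiply]; simp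
  have hιZι : ι * Z' * ι = Matrix.fromBlocks (blk Z (· ∈ T) (· ∈ T)) 0 0 0 := by
    rw [hZblock, hι, Matrix.fromBlocks_multiply, Matrix.fromBlocks_multiply]; simp
  have hbig : G * (ι * Z' * ι) * G = G := by
    calc G * (ι * Z' * ι) * G = (G * ι) * Z' * (ι * G) := by
          simp only [Matrix.mul_assoc]
    _ = G * Z' * G := by rw [hGι, hιG]
    _ = (Xᵀ * L') * Z' * (L' * X) := by rw [hXG, hLX]
    _ = Xᵀ * (L' * Z' * L') * X := by simp only [Matrix.mul_assoc]
    _ = Xᵀ * L' * X := by rw [hZ1']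
    _ = G * X := by rw [hXG]
    _ = (Xᵀ * G)ᵀ := by rw [Matrix.transpose_mul, Matrix.transpose_transpose, hGsym]
    _ = (Xᵀ * (ι * G))ᵀ := by rw [hιG]
    _ = ((Xᵀ * ι) * G)ᵀ := by rw [Matrix.mul_assoc]
    _ = (ι * G)ᵀ := by rw [hXι]
    _ = G := by rw [hιG, hGsym]
  rw [hιZι, hG, Matrix.fromBlocks_multiply, Matrix.fromBlocks_multiply] at hbig
  have hblk11 := congrArg Matrix.toBlocks₁₁ hbig
  simp only [Matrix.toBlocks_fromBlocks₁₁] at hblk11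
  rw [hSC]
  simpa using hblk11
end
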